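/- For r ∈ [1, n-1], Ω_r^{(n)} = Σ_{i=r-1}^{n-1} C(i, r-1) · (1 + Σ_{j=i+1}^{n-1} θ_j^{(n)}). -/

import Mathlib

open Finset

/-- `l` encodes a (non-degenerate) indexing matrix on `n` points: the columns,
listed left to right, as pairs `(top entry, bottom entry)`.  Entries lie in
`[0, n-1]`, the first row is strictly increasing, the second row is weakly
increasing, repeated second-row entries are `0`, and each top entry is at
least the corresponding bottom entry. -/
def IsIndexingMatrix (n : ℕ) (l : List (ℕ × ℕ)) : Prop :=
  1 ≤ l.length ∧ l.length ≤ n ∧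
  (∀ p ∈ l, p.1 < n ∧ p.2 ≤ p.1) ∧
  l.Pairwise (fun p q => p.1 < q.1 ∧ p.2 ≤ q.2 ∧ (p.2 = q.2 → p.2 = 0))

/-- A positive indexing matrix: all entries are positive. -/
def IsPositiveIndexingMatrix (n : ℕ) (l : List (ℕ × ℕ)) : Prop :=
  IsIndexingMatrix n l ∧ ∀ p ∈ l, 0 < p.1 ∧ 0 < p.2

/-- `θ_k^{(n)}`: the number of positive indexing matrices whose `(1,1)` entry
equals `k`. -/
noncomputable def theta (n k : ℕ) : ℕ :=
  Nat.card {l : List (ℕ × ℕ) //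
    IsPositiveIndexingMatrix n l ∧ l.head?.map Prod.fst = some k}

/-- The blob-rank of an indexing matrix: the number of its columns containing
a `0`. -/
def blobRank (l : List (ℕ × ℕ)) : ℕ := l.countP (fun p => p.1 == 0 || p.2 == 0)

/-- `Ω_r^{(n)}`: the number of indexing matrices on `n` points of blob-rank `r`,
the degenerate indexing matrix being counted in `Ω_0^{(n)}`. -/
noncomputable def Omega (n r : ℕ) : ℕ :=
  Nat.card {l : List (ℕ × ℕ) // IsIndexingMatrix n l ∧ blobRank l = r} +
    (if r = 0 then 1 else 0)

/-- `χ_k^{(n)} = Σ_{i₁+⋯+i_k = n-k} C_{i₁} ⋯ C_{i_k}` (Catalan numbers). -/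
def chi (n k : ℕ) : ℕ :=
  ∑ t ∈ Finset.Nat.antidiagonalTuple k (n - k), ∏ j, catalan (t j)

/-- A Temperley–Lieb diagram on `n` points: a non-crossing perfect matching of
`2n` boundary points numbered clockwise, given by a fixed-point free
involution. -/
structure TLDiagram (n : ℕ) where
  f : Fin (2 * n) → Fin (2 * n)
  involutive : ∀ x, f (f x) = x
  noFixedPoint : ∀ x, f x ≠ x
  noncrossing : ∀ a b : Fin (2 * n), a < b → b < f a → f a < f b → False

/-- `a` is the left (smaller) endpoint of an arc of `D`. -/
def TLDiagram.IsArc {n : ℕ} (D : TLDiagram n) (a : Fin (2 * n)) : Prop :=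
  a < D.f a

/-- The arc with left endpoint `a` is exposed to the left side of the diagram,
i.e. it is not nested inside any other arc. -/
def TLDiagram.IsExposed {n : ℕ} (D : TLDiagram n) (a : Fin (2 * n)) : Prop :=
  a < D.f a ∧ ∀ c, ¬ (c < a ∧ D.f a < D.f c)

/-- The number of arcs of `D` exposed to the left side. -/
noncomputable def exposedCount {n : ℕ} (D : TLDiagram n) : ℕ :=
  Nat.card {a : Fin (2 * n) // D.IsExposed a}

/-- A `d`-abacus blob diagram on `n` points: a TL-diagram together with blobs
on some arcs exposed to the left, one bead count in `ℤ/dℤ` on every arc, and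
an extra bead count on every blobbed arc (its second component). -/
structure AbacusBlobDiagram (d n : ℕ) where
  base : TLDiagram n
  blob : Fin (2 * n) → Bool
  blob_exposed : ∀ a, blob a = true → base.IsExposed a
  beads₁ : Fin (2 * n) → ZMod d
  beads₂ : Fin (2 * n) → ZMod d
  beads₁_arc : ∀ a, ¬ base.IsArc a → beads₁ a = 0
  beads₂_blob : ∀ a, blob a = false → beads₂ a = 0

/-- A `d`-abacus hook diagram on `n` points: a blobbed TL-diagram in which all
blobbed arcs are merged into the single hook component through `0, 0'`, with a
bead count in `ℤ/dℤ` on every unblobbed arc and one on the hook component. -/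
structure AbacusHookDiagram (d n : ℕ) where
  base : TLDiagram n
  blob : Fin (2 * n) → Bool
  blob_exposed : ∀ a, blob a = true → base.IsExposed a
  beads : Fin (2 * n) → ZMod d
  beads_arc : ∀ a, ¬ base.IsArc a ∨ blob a = true → beads a = 0
  hookBeads : ZMod d

namespace Stmt8Aux

def zwPred : ℕ × ℕ → Bool := fun p => p.2 == 0

def zPart (l : List (ℕ × ℕ)) : List ℕ := (l.takeWhile zwPred).map Prod.fst

def tPart (l : List (ℕ × ℕ)) : List (ℕ × ℕ) := l.dropWhile zwPred

def iOf (l : List (ℕ × ℕ)) : ℕ := (zPart l).getLast?.getD 0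

def headfst (t : List (ℕ × ℕ)) : ℕ := (t.head?.map Prod.fst).getD 0

def recon (i : ℕ) (s : Finset ℕ) (t : List (ℕ × ℕ)) : List (ℕ × ℕ) :=
  ((s.sort (· ≤ ·) ++ [i]).map (fun a => (a, 0))) ++ t

/-! ### Finiteness -/

lemma finite_aux (n : ℕ) (Q : List (ℕ × ℕ) → Prop)
    (hQ : ∀ l, Q l → l.length ≤ n ∧ ∀ p ∈ l, p.1 < n ∧ p.2 < n) :
    Finite {l : List (ℕ × ℕ) // Q l} := by
  have : Finite ({l : List (Fin n × Fin n) | l.length ≤ n} : Set _) :=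
    (List.finite_length_le (Fin n × Fin n) n).to_subtype
  refine Finite.of_injective (β := {l : List (Fin n × Fin n) | l.length ≤ n})
    (fun x => ⟨x.1.pmap (fun p h => ((⟨p.1, h.1⟩ : Fin n), (⟨p.2, h.2⟩ : Fin n)))
      (hQ x.1 x.2).2, by simpa using (hQ x.1 x.2).1⟩) ?_
  intro x y hxy
  have hxy' : x.1.pmap (fun p h => ((⟨p.1, h.1⟩ : Fin n), (⟨p.2, h.2⟩ : Fin n))) (hQ x.1 x.2).2
      = y.1.pmap (fun p h => ((⟨p.1, h.1⟩ : Fin n), (⟨p.2, h.2⟩ : Fin n))) (hQ y.1 y.2).2 :=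
    congrArg Subtype.val hxy
  have := congrArg (List.map (fun p : Fin n × Fin n => ((p.1 : ℕ), (p.2 : ℕ)))) hxy'
  simp only [List.map_pmap] at this
  ext1
  have hx : x.1.pmap (fun (a : ℕ × ℕ) (_ : a.1 < n ∧ a.2 < n) => (a.1, a.2)) (hQ x.1 x.2).2
      = x.1 := by rw [List.pmap_eq_map]; simp
  have hy : y.1.pmap (fun (a : ℕ × ℕ) (_ : a.1 < n ∧ a.2 < n) => (a.1, a.2)) (hQ y.1 y.2).2
      = y.1 := by rw [List.pmap_eq_map]; simp
  rw [← hx, ← hy]; exact this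

lemma finite_im (n : ℕ) (Q : List (ℕ × ℕ) → Prop)
    (hQ : ∀ l, Q l → IsIndexingMatrix n l) : Finite {l : List (ℕ × ℕ) // Q l} := by
  refine finite_aux n Q (fun l h => ⟨(hQ l h).2.1, fun p hp => ?_⟩)
  obtain ⟨h1, h2⟩ := (hQ l h).2.2.1 p hp
  exact ⟨h1, lt_of_le_of_lt h2 h1⟩

/-! ### Basic list lemmas -/

lemma lenbound' {m : ℕ} {w : List ℕ} (hw : w.Pairwise (· < ·)) (h2 : ∀ x ∈ w, x < m) :
    w.length ≤ m := by
  have hnd : w.Nodup := hw.imp fun h => Nat.ne_of_lt h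
  calc w.length = w.toFinset.card := (List.toFinset_card_of_nodup hnd).symm
    _ ≤ (range m).card := Finset.card_le_card (by
        intro x hx; simp only [List.mem_toFinset] at hx; simpa using h2 x hx)
    _ = m := card_range m

lemma lenbound {n : ℕ} {l : List (ℕ × ℕ)} (h1 : l.Pairwise fun p q => p.1 < q.1)
    (h2 : ∀ p ∈ l, p.1 < n) : l.length ≤ n := by
  have := lenbound' (w := l.map Prod.fst) (List.pairwise_map.2 h1)
    (by intro x hx; simp only [List.mem_map] at hx; obtain ⟨p, hp, rfl⟩ := hx; exact h2 p hp)
  simpa using this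

/-- take/dropWhile computation on recon-shaped lists. -/
lemma takeWhile_zeros_append (w : List ℕ) (t : List (ℕ × ℕ))
    (ht : ∀ p ∈ t.head?, p.2 ≠ 0) :
    (w.map (fun a => (a, 0)) ++ t).takeWhile zwPred = w.map (fun a => (a, 0)) ∧
    (w.map (fun a => (a, 0)) ++ t).dropWhile zwPred = t := by
  induction w with
  | nil =>
    simp only [List.map_nil, List.nil_append]
    cases t with
    | nil => simp
    | cons h rest =>
      have : zwPred h = false := by
        simp only [zwPred, beq_eq_false_iff_ne, ne_eq]
        exact ht h (by simp)
      constructor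
      · rw [List.takeWhile_cons, this]; simp
      · rw [List.dropWhile_cons, this]; simp
  | cons a w ih =>
    have hz : zwPred (a, 0) = true := by simp [zwPred]
    simp only [List.map_cons, List.cons_append]
    constructor
    · rw [List.takeWhile_cons, hz]; simp [ih.1]
    · rw [List.dropWhile_cons, hz]; simp [ih.2]


lemma head_dropWhile_false {α : Type*} (p : α → Bool) (l : List α) {h : α} {rest : List α}
    (he : l.dropWhile p = h :: rest) : p h = false := by
  induction l with
  | nil => simp at he
  | cons a l ih =>
    rw [List.dropWhile_cons] at he
    by_cases hpa : p a = true
    · rw [if_pos hpa] at he; exact ih he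
    · rw [if_neg hpa] at he
      obtain ⟨rfl, -⟩ := List.cons.injEq .. ▸ he
      exact eq_false_of_ne_true hpa

section Decomp

/-- the pairwise relation -/
def R (p q : ℕ × ℕ) : Prop := p.1 < q.1 ∧ p.2 ≤ q.2 ∧ (p.2 = q.2 → p.2 = 0)

variable {n r : ℕ} {l : List (ℕ × ℕ)}

lemma mem_takeWhile_snd {p : ℕ × ℕ} (hp : p ∈ l.takeWhile zwPred) : p.2 = 0 := by
  have := List.mem_takeWhile_imp hp
  simpa [zwPred] using this

lemma tPart_pos (hl : IsIndexingMatrix n l) : ∀ p ∈ tPart l, 0 < p.1 ∧ 0 < p.2 := by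
  intro p hp
  have hpl : p ∈ l := (List.dropWhile_sublist zwPred).mem hp
  suffices h2 : 0 < p.2 from ⟨lt_of_lt_of_le h2 (hl.2.2.1 p hpl).2, h2⟩
  unfold tPart at hp
  cases htp : l.dropWhile zwPred with
  | nil => rw [htp] at hp; simp at hp
  | cons h rest =>
    have hh : h.2 ≠ 0 := by
      have := head_dropWhile_false zwPred l htp
      simpa [zwPred] using this
    have hpw : (h :: rest).Pairwise (fun p q => p.1 < q.1 ∧ p.2 ≤ q.2 ∧ (p.2 = q.2 → p.2 = 0)) :=
      hl.2.2.2.sublist (htp ▸ List.dropWhile_sublist zwPred)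
    rw [htp] at hp
    rcases List.mem_cons.1 hp with rfl | hp'
    · exact Nat.pos_of_ne_zero hh
    · have := (List.pairwise_cons.1 hpw).1 p hp'
      exact lt_of_lt_of_le (Nat.pos_of_ne_zero hh) this.2.1

lemma blobRank_eq_takeWhile_length (hl : IsIndexingMatrix n l) :
    blobRank l = (l.takeWhile zwPred).length := by
  unfold blobRank
  have h1 : l.countP (fun p => p.1 == 0 || p.2 == 0) = l.countP zwPred := by
    refine List.countP_congr fun p hp => ?_
    have h2 := (hl.2.2.1 p hp).2
    simp only [zwPred, Bool.or_eq_true, beq_iff_eq]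
    constructor
    · rintro (h | h); · omega
      · exact h
    · intro h; exact Or.inr h
  rw [h1, ← List.takeWhile_append_dropWhile (p := zwPred) (l := l), List.countP_append,
    List.takeWhile_append_dropWhile]
  have h2 : (l.takeWhile zwPred).countP zwPred = (l.takeWhile zwPred).length :=
    List.countP_eq_length.2 fun a ha => List.mem_takeWhile_imp ha
  have h3 : (l.dropWhile zwPred).countP zwPred = 0 :=
    List.countP_eq_zero.2 fun a ha => by
      have := (tPart_pos hl a ha).2
      simp [zwPred]; omega
  omega

lemma zPart_sorted (hl : IsIndexingMatrix n l) : (zPart l).Pairwise (· < ·) :=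
  List.pairwise_map.2 ((hl.2.2.2.sublist (List.takeWhile_sublist zwPred)).imp fun h => h.1)

lemma zPart_lt (hl : IsIndexingMatrix n l) : ∀ x ∈ zPart l, x < n := by
  intro x hx
  simp only [zPart, List.mem_map] at hx
  obtain ⟨p, hp, rfl⟩ := hx
  exact (hl.2.2.1 p ((List.takeWhile_sublist zwPred).mem hp)).1

lemma zPart_length (hl : IsIndexingMatrix n l) (hr : blobRank l = r) :
    (zPart l).length = r := by
  rw [zPart, List.length_map, ← blobRank_eq_takeWhile_length hl, hr]

lemma zPart_ne_nil (hl : IsIndexingMatrix n l) (hr : blobRank l = r) (h1 : 1 ≤ r) :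
    zPart l ≠ [] := by
  have := zPart_length hl hr
  intro h; rw [h] at this; simp at this; omega


lemma le_getLast_of_sorted {w : List ℕ} (hw : w.Pairwise (· < ·)) (h : w ≠ []) :
    ∀ x ∈ w, x ≤ w.getLast h := by
  intro x hx
  have hsplit := List.dropLast_append_getLast h
  have hw' : (w.dropLast ++ [w.getLast h]).Pairwise (· < ·) := by rw [hsplit]; exact hw
  rw [← hsplit] at hx
  rcases List.mem_append.1 hx with hx' | hx'
  · exact le_of_lt ((List.pairwise_append.1 hw').2.2 x hx' _ (by simp))
  · simp only [List.mem_singleton] at hx'; omega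

lemma lt_getLast_of_mem_dropLast {w : List ℕ} (hw : w.Pairwise (· < ·)) (h : w ≠ []) :
    ∀ x ∈ w.dropLast, x < w.getLast h := by
  intro x hx
  have hsplit := List.dropLast_append_getLast h
  have hw' : (w.dropLast ++ [w.getLast h]).Pairwise (· < ·) := by rw [hsplit]; exact hw
  exact (List.pairwise_append.1 hw').2.2 x hx _ (by simp)

variable {n r : ℕ} {l : List (ℕ × ℕ)}

lemma iOf_eq (h : zPart l ≠ []) : iOf l = (zPart l).getLast h := by
  rw [iOf, List.getLast?_eq_getLast h, Option.getD_some]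

lemma iOf_mem (h : zPart l ≠ []) : iOf l ∈ zPart l := by
  rw [iOf_eq h]; exact List.getLast_mem h

lemma iOf_bounds (hl : IsIndexingMatrix n l) (hr : blobRank l = r) (h1 : 1 ≤ r) :
    iOf l ∈ Finset.Icc (r - 1) (n - 1) := by
  have hz := zPart_ne_nil hl hr h1
  have hlt : iOf l < n := zPart_lt hl _ (iOf_mem hz)
  have hlen : (zPart l).length ≤ iOf l + 1 := by
    refine lenbound' (zPart_sorted hl) fun x hx => ?_
    have := le_getLast_of_sorted (zPart_sorted hl) hz x hx
    rw [iOf_eq hz]; omega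
  rw [zPart_length hl hr] at hlen
  simp only [Finset.mem_Icc]
  omega

/-- forward decomposition facts -/
lemma decompose (hl : IsIndexingMatrix n l) (hr : blobRank l = r) (h1 : 1 ≤ r) :
    l = recon (iOf l) (zPart l).dropLast.toFinset (tPart l) ∧
    (zPart l).dropLast.toFinset ∈ powersetCard (r - 1) (range (iOf l)) ∧
    (tPart l = [] ∨ (IsPositiveIndexingMatrix n (tPart l) ∧ iOf l < headfst (tPart l))) := by
  have hz := zPart_ne_nil hl hr h1
  have hsorted := zPart_sorted hl
  have hnd : (zPart l).Nodup := hsorted.imp fun h => Nat.ne_of_lt h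
  have hndd : (zPart l).dropLast.Nodup := hnd.sublist (List.dropLast_sublist _)
  have hsd : (zPart l).dropLast.Pairwise (· ≤ ·) :=
    (hsorted.sublist (List.dropLast_sublist _)).imp fun h => le_of_lt h
  have hsort : ((zPart l).dropLast.toFinset.sort (· ≤ ·)) = (zPart l).dropLast :=
    (List.toFinset_sort _ hndd).2 hsd
  have hAB : ((zPart l).dropLast.toFinset.sort (· ≤ ·)) ++ [iOf l] = zPart l := by
    rw [hsort, iOf_eq hz, List.dropLast_append_getLast hz]
  have hmapz : (zPart l).map (fun a => (a, 0)) = l.takeWhile zwPred := by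
    rw [zPart, List.map_map]
    have : ∀ p ∈ l.takeWhile zwPred, ((fun a => (a, (0:ℕ))) ∘ Prod.fst) p = id p := by
      intro p hp
      have := mem_takeWhile_snd hp
      simp only [Function.comp, id]
      exact Prod.ext rfl this.symm
    rw [List.map_congr_left this, List.map_id]
  refine ⟨?_, ?_, ?_⟩
  · rw [recon, hAB, hmapz]
    exact (List.takeWhile_append_dropWhile).symm
  · rw [Finset.mem_powersetCard]
    constructor
    · intro x hx
      simp only [List.mem_toFinset] at hx
      have := lt_getLast_of_mem_dropLast hsorted hz x hx
      rw [Finset.mem_range, ← iOf_eq hz] at *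
      omega
    · rw [List.toFinset_card_of_nodup hndd, List.length_dropLast, zPart_length hl hr]
  · by_cases ht : tPart l = []
    · exact Or.inl ht
    · refine Or.inr ⟨⟨⟨?_, ?_, ?_, ?_⟩, tPart_pos hl⟩, ?_⟩
      · exact Nat.one_le_iff_ne_zero.2 (fun h => ht (List.length_eq_zero_iff.1 h))
      · exact le_trans (List.dropWhile_sublist zwPred).length_le hl.2.1
      · exact fun p hp => hl.2.2.1 p ((List.dropWhile_sublist zwPred).mem hp)
      · exact hl.2.2.2.sublist (List.dropWhile_sublist zwPred)
      · -- iOf l < headfst (tPart l)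
        have hsplit := List.takeWhile_append_dropWhile (p := zwPred) (l := l)
        have hpw : (l.takeWhile zwPred ++ l.dropWhile zwPred).Pairwise
            (fun p q => p.1 < q.1 ∧ p.2 ≤ q.2 ∧ (p.2 = q.2 → p.2 = 0)) := by
          rw [hsplit]; exact hl.2.2.2
        have hcross := (List.pairwise_append.1 hpw).2.2
        have htw : l.takeWhile zwPred ≠ [] := by
          intro h; apply hz; rw [zPart, h]; rfl
        obtain ⟨hd, rest, hdw⟩ := List.exists_cons_of_ne_nil (show l.dropWhile zwPred ≠ [] from fun h => ht (by rw [tPart, h]))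
        have hlast : (l.takeWhile zwPred).getLast htw ∈ l.takeWhile zwPred :=
          List.getLast_mem htw
        have hhd : hd ∈ l.dropWhile zwPred := by rw [show l.dropWhile zwPred = hd :: rest from hdw]; simp
        have hR := hcross _ hlast _ hhd
        have hi : iOf l = ((l.takeWhile zwPred).getLast htw).1 := by
          rw [iOf_eq hz]
          unfold zPart
          exact List.getLast_map _
        have hh : headfst (tPart l) = hd.1 := by
          rw [headfst, tPart, hdw]; rfl
        rw [hi, hh]
        exact hR.1


/-- reverse reconstruction facts -/
lemma reconstruct {n r i : ℕ} (h1 : 1 ≤ r) (h2 : r ≤ n - 1) (hi : i ∈ Finset.Icc (r - 1) (n - 1))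
    {s : Finset ℕ} (hs : s ∈ powersetCard (r - 1) (range i))
    {t : List (ℕ × ℕ)} (ht : t = [] ∨ (IsPositiveIndexingMatrix n t ∧ i < headfst t)) :
    IsIndexingMatrix n (recon i s t) ∧ blobRank (recon i s t) = r ∧
    iOf (recon i s t) = i ∧ (zPart (recon i s t)).dropLast.toFinset = s ∧
    tPart (recon i s t) = t := by
  have hn2 : 2 ≤ n := by
    simp only [Finset.mem_Icc] at hi; omega
  have hin : i ≤ n - 1 := (Finset.mem_Icc.1 hi).2
  set w : List ℕ := s.sort (· ≤ ·) ++ [i] with hw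
  have hsmem : ∀ x ∈ s, x < i := by
    intro x hx
    have := (Finset.mem_powersetCard.1 hs).1 hx
    simpa using this
  have hcard : s.card = r - 1 := (Finset.mem_powersetCard.1 hs).2
  have hwsort : w.Pairwise (· < ·) := by
    rw [hw]
    refine List.pairwise_append.2 ⟨(Finset.sortedLT_sort s).pairwise, by simp, ?_⟩
    intro a ha b hb
    simp only [List.mem_singleton] at hb
    subst hb
    exact hsmem a (Finset.mem_sort (· ≤ ·) |>.1 ha)
  have hwlt : ∀ x ∈ w, x < n := by
    intro x hx
    rcases List.mem_append.1 hx with hx' | hx'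
    · have := hsmem x (Finset.mem_sort (· ≤ ·) |>.1 hx'); omega
    · simp only [List.mem_singleton] at hx'; omega
  have hwlen : w.length = r := by
    rw [hw]
    simp only [List.length_append, List.length_singleton, Finset.length_sort, hcard]
    omega
  have htne : t ≠ [] → IsPositiveIndexingMatrix n t ∧ i < headfst t := by
    intro h; rcases ht with h' | h'; · exact absurd h' h
    · exact h'
  have htpos : ∀ p ∈ t, 0 < p.1 ∧ 0 < p.2 := by
    intro p hp
    have hne : t ≠ [] := by rintro rfl; simp at hp
    exact (htne hne).1.2 p hp
  have hthead : ∀ q ∈ t, headfst t ≤ q.1 := by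
    intro q hq
    cases t with
    | nil => simp at hq
    | cons h rest =>
      have hpw : (h :: rest).Pairwise (fun p q => p.1 < q.1 ∧ p.2 ≤ q.2 ∧ (p.2 = q.2 → p.2 = 0)) :=
        (htne (by simp)).1.1.2.2.2
      have hhf : headfst (h :: rest) = h.1 := rfl
      rcases List.mem_cons.1 hq with rfl | hq'
      · omega
      · have := (List.pairwise_cons.1 hpw).1 q hq'
        rw [hhf]; exact le_of_lt this.1
  have hheadne : ∀ p ∈ t.head?, p.2 ≠ 0 := by
    intro p hp
    cases t with
    | nil => simp at hp
    | cons h rest =>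
      simp only [List.head?_cons, Option.mem_some_iff] at hp
      subst hp
      have := (htpos h (by simp)).2; omega
  have htkdw := takeWhile_zeros_append w t hheadne
  have hLpw : (recon i s t).Pairwise
      (fun p q => p.1 < q.1 ∧ p.2 ≤ q.2 ∧ (p.2 = q.2 → p.2 = 0)) := by
    rw [recon]
    refine List.pairwise_append.2 ⟨?_, ?_, ?_⟩
    · refine List.pairwise_map.2 (hwsort.imp ?_)
      intro a b hab
      exact ⟨hab, le_refl 0, fun _ => rfl⟩
    · cases t with
      | nil => simp
      | cons h rest => exact (htne (by simp)).1.1.2.2.2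
    · intro p hp q hq
      simp only [List.mem_map] at hp
      obtain ⟨a, ha, rfl⟩ := hp
      have hne : t ≠ [] := by rintro rfl; simp at hq
      have hihd := (htne hne).2
      have hai : a ≤ i := by
        rcases List.mem_append.1 ha with ha' | ha'
        · exact le_of_lt (hsmem a (Finset.mem_sort (· ≤ ·) |>.1 ha'))
        · simp only [List.mem_singleton] at ha'; omega
      refine ⟨?_, Nat.zero_le _, fun _ => rfl⟩
      have := hthead q hq
      omega
  have hentry : ∀ p ∈ recon i s t, p.1 < n ∧ p.2 ≤ p.1 := by
    intro p hp
    rcases List.mem_append.1 hp with hp' | hp'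
    · simp only [List.mem_map] at hp'
      obtain ⟨a, ha, rfl⟩ := hp'
      exact ⟨hwlt a ha, Nat.zero_le a⟩
    · have hne : t ≠ [] := by rintro rfl; simp at hp'
      exact (htne hne).1.1.2.2.1 p hp'
  have hIM : IsIndexingMatrix n (recon i s t) := by
    refine ⟨?_, ?_, hentry, hLpw⟩
    · rw [recon]
      simp only [List.length_append, List.length_map, List.length_singleton]
      omega
    · exact lenbound (hLpw.imp fun h => h.1) fun p hp => (hentry p hp).1
  have htake : (recon i s t).takeWhile zwPred = w.map (fun a => (a, 0)) := htkdw.1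
  have hdrop : (recon i s t).dropWhile zwPred = t := htkdw.2
  have hzp : zPart (recon i s t) = w := by
    rw [zPart, htake, List.map_map]
    exact List.map_id w
  refine ⟨hIM, ?_, ?_, ?_, ?_⟩
  · rw [blobRank_eq_takeWhile_length hIM, htake, List.length_map, hwlen]
  · rw [iOf, hzp, hw, List.getLast?_concat, Option.getD_some]
  · rw [hzp, hw, List.dropLast_concat, Finset.sort_toFinset]
  · rw [tPart, hdrop]

end Decomp

/-! ### Counting -/

lemma card_fiberwise {X : Type*} [Finite X] {s : Finset ℕ} (g : X → ℕ) (hg : ∀ x, g x ∈ s) :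
    Nat.card X = ∑ i ∈ s, Nat.card {x : X // g x = i} := by
  classical
  cases nonempty_fintype X
  rw [Nat.card_eq_fintype_card, ← Finset.card_univ,
    Finset.card_eq_sum_card_fiberwise (fun x _ => hg x)]
  refine Finset.sum_congr rfl fun i _ => ?_
  rw [Nat.card_eq_fintype_card, Fintype.card_subtype]

lemma headfst_eq {t : List (ℕ × ℕ)} (h : t ≠ []) :
    t.head?.map Prod.fst = some (headfst t) := by
  cases t with
  | nil => exact absurd rfl h
  | cons a rest => rfl

lemma card_T (n i : ℕ) :
    Nat.card {t : List (ℕ × ℕ) // t = [] ∨ (IsPositiveIndexingMatrix n t ∧ i < headfst t)} =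
    1 + ∑ j ∈ Finset.Icc (i + 1) (n - 1), theta n j := by
  have finQ : Finite {t : List (ℕ × ℕ) // IsPositiveIndexingMatrix n t ∧ i < headfst t} :=
    finite_im n _ fun l h => h.1.1
  have e : {t : List (ℕ × ℕ) // t = [] ∨ (IsPositiveIndexingMatrix n t ∧ i < headfst t)} ≃
      Option {t : List (ℕ × ℕ) // IsPositiveIndexingMatrix n t ∧ i < headfst t} :=
    { toFun := fun x => if h : x.1 = [] then none else some ⟨x.1, x.2.resolve_left h⟩
      invFun := fun o => o.elim ⟨[], Or.inl rfl⟩ (fun y => ⟨y.1, Or.inr y.2⟩)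
      left_inv := by
        rintro ⟨t, ht⟩
        by_cases h : t = []
        · subst h; rfl
        · simp only [dif_neg h]; rfl
      right_inv := by
        rintro (_ | ⟨t, ht⟩)
        · simp
        · have hne : t ≠ [] := by
            intro h
            have := ht.1.1.1
            rw [h] at this; simp at this
          simp [Option.elim_some, hne] }
  rw [Nat.card_congr e, Finite.card_option]
  have hfib : ∀ x : {t : List (ℕ × ℕ) // IsPositiveIndexingMatrix n t ∧ i < headfst t},
      headfst x.1 ∈ Finset.Icc (i + 1) (n - 1) := by
    rintro ⟨t, ht⟩
    have hne : t ≠ [] := by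
      intro h; have := ht.1.1.1; rw [h] at this; simp at this
    obtain ⟨a, rest, rfl⟩ := List.exists_cons_of_ne_nil hne
    have ha : a.1 < n := (ht.1.1.2.2.1 a (by simp)).1
    have hhf : headfst (a :: rest) = a.1 := rfl
    simp only [Finset.mem_Icc, hhf]
    have := ht.2
    rw [hhf] at this
    omega
  rw [card_fiberwise (fun x => headfst x.1) hfib]
  have : ∀ j ∈ Finset.Icc (i + 1) (n - 1),
      Nat.card {x : {t : List (ℕ × ℕ) // IsPositiveIndexingMatrix n t ∧ i < headfst t} //
        headfst x.1 = j} = theta n j := by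
    intro j hj
    rw [Nat.card_congr (Equiv.subtypeSubtypeEquivSubtypeInter
      (fun t => IsPositiveIndexingMatrix n t ∧ i < headfst t) (fun t => headfst t = j))]
    rw [theta]
    refine Nat.card_congr (Equiv.subtypeEquivRight fun t => ?_)
    constructor
    · rintro ⟨⟨hp, -⟩, hh⟩
      refine ⟨hp, ?_⟩
      have hne : t ≠ [] := by
        intro h; have := hp.1.1; rw [h] at this; simp at this
      rw [headfst_eq hne, hh]
    · rintro ⟨hp, hh⟩
      have hne : t ≠ [] := by
        intro h; have := hp.1.1; rw [h] at this; simp at this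
      have := headfst_eq (t := t) hne
      rw [this] at hh
      have hj' : headfst t = j := by simpa using hh
      simp only [Finset.mem_Icc] at hj
      exact ⟨⟨hp, by omega⟩, hj'⟩
  rw [Finset.sum_congr rfl this, add_comm]

lemma card_fiber {n r i : ℕ} (h1 : 1 ≤ r) (h2 : r ≤ n - 1) (hi : i ∈ Finset.Icc (r - 1) (n - 1)) :
    Nat.card {l : List (ℕ × ℕ) // (IsIndexingMatrix n l ∧ blobRank l = r) ∧ iOf l = i} =
    i.choose (r - 1) * (1 + ∑ j ∈ Finset.Icc (i + 1) (n - 1), theta n j) := by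
  have e : {l : List (ℕ × ℕ) // (IsIndexingMatrix n l ∧ blobRank l = r) ∧ iOf l = i} ≃
      {s : Finset ℕ // s ∈ powersetCard (r - 1) (range i)} ×
      {t : List (ℕ × ℕ) // t = [] ∨ (IsPositiveIndexingMatrix n t ∧ i < headfst t)} :=
    { toFun := fun x =>
        (⟨(zPart x.1).dropLast.toFinset, by
          obtain ⟨l, hlr, rfl⟩ := x; exact (decompose hlr.1 hlr.2 h1).2.1⟩,
         ⟨tPart x.1, by
          obtain ⟨l, hlr, rfl⟩ := x; exact (decompose hlr.1 hlr.2 h1).2.2⟩)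
      invFun := fun y => ⟨recon i y.1.1 y.2.1, by
        have h := reconstruct h1 h2 hi y.1.2 y.2.2
        exact ⟨⟨h.1, h.2.1⟩, h.2.2.1⟩⟩
      left_inv := by
        rintro ⟨l, ⟨hl, hr⟩, hio⟩
        refine Subtype.ext ?_
        have h := (decompose hl hr h1).1
        simp only
        rw [← hio]
        exact h.symm
      right_inv := by
        rintro ⟨⟨s, hs⟩, ⟨t, ht⟩⟩
        have h := reconstruct h1 h2 hi hs ht
        simp only
        exact Prod.ext (Subtype.ext h.2.2.2.1) (Subtype.ext h.2.2.2.2) }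
  rw [Nat.card_congr e, Nat.card_prod, card_T]
  congr 1
  rw [Nat.card_eq_fintype_card, Fintype.card_coe, Finset.card_powersetCard, Finset.card_range]

end Stmt8Aux

/-- for `r ∈ [1, n-1]`,
`Ω_r^{(n)} = Σ_{i=r-1}^{n-1} C(i, r-1) ⬝ (1 + Σ_{j=i+1}^{n-1} θ_j^{(n)})`. -/
theorem stmt8 (n r : ℕ) (h1 : 1 ≤ r) (h2 : r ≤ n - 1) :
    Omega n r =
      ∑ i ∈ Finset.Icc (r - 1) (n - 1),
        i.choose (r - 1) * (1 + ∑ j ∈ Finset.Icc (i + 1) (n - 1), theta n j) := by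
  have h0 : r ≠ 0 := by omega
  rw [Omega, if_neg h0, add_zero]
  haveI : Finite {l : List (ℕ × ℕ) // IsIndexingMatrix n l ∧ blobRank l = r} :=
    Stmt8Aux.finite_im n _ fun l h => h.1
  rw [Stmt8Aux.card_fiberwise (fun x => Stmt8Aux.iOf x.1)
    (fun x => Stmt8Aux.iOf_bounds x.2.1 x.2.2 h1)]
  refine Finset.sum_congr rfl fun i hi => ?_
  rw [Nat.card_congr (Equiv.subtypeSubtypeEquivSubtypeInter
    (fun l => IsIndexingMatrix n l ∧ blobRank l = r) (fun l => Stmt8Aux.iOf l = i))]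
  exact Stmt8Aux.card_fiber h1 h2 hi
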